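/- Suppose Assumption (A) holds, 0 < ε < 1, and r(n−1) ≤ ε. Then for every sign vector s ∈ {−1,+1}^{n−1}, |P^(s)_1 + 1/(α−1)| ≤ 2(2−ε)·r(n−1)/((α−1)(1−ε)²). -/

import Mathlib

open Matrix Polynomial Finset

noncomputable section

/-- The companion-type matrix of the `n`-dimensional border-collision normal form:
`(i,1)` entry is `-a i`, `(i,i+1)` entries are `1`, all other entries `0`. -/
def bcMat (n : ℕ) (a : Fin n → ℝ) : Matrix (Fin n) (Fin n) ℝ :=
  Matrix.of fun i j =>
    (if (j : ℕ) = 0 then -a i else 0) + (if (j : ℕ) = (i : ℕ) + 1 then 1 else 0)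

/-- The vector `b = (1,0,…,0)`. -/
def bcVec (n : ℕ) : Fin n → ℝ := fun i => if (i : ℕ) = 0 then 1 else 0

/-- `ρ` is an eigenvalue of `M` (of algebraic multiplicity one, automatic when `|ρ| > r`)
and all remaining eigenvalues of `M` over `ℂ`, counted with multiplicity,
have modulus at most `r`. -/
def specA (n : ℕ) (M : Matrix (Fin n) (Fin n) ℝ) (ρ r : ℝ) : Prop :=
  ∃ lam : Fin (n - 1) → ℂ,
    (∀ j, ‖lam j‖ ≤ r) ∧
      M.charpoly.map (algebraMap ℝ ℂ) =
        (X - C (ρ : ℂ)) * ∏ j : Fin (n - 1), (X - C (lam j))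

/-- Assumption (A). -/
def assumptionA (n : ℕ) (aL aR : Fin n → ℝ) (α β r : ℝ) : Prop :=
  1 < α ∧ 1 < β ∧ 0 < r ∧ r < 1 ∧
    specA n (bcMat n aL) α r ∧ specA n (bcMat n aR) (-β) r

/-- The border-collision normal form map `f`. -/
def bcf (n : ℕ) (aL aR : Fin n → ℝ) (x : Fin n → ℝ) : Fin n → ℝ :=
  if ∀ i : Fin n, (i : ℕ) = 0 → x i ≤ 0 then (bcMat n aL).mulVec x + bcVec n
  else (bcMat n aR).mulVec x + bcVec n

/-- The fixed point `Y = (I − A_L)⁻¹ b`. -/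
def Ypt (n : ℕ) (aL : Fin n → ℝ) : Fin n → ℝ :=
  ((1 - bcMat n aL)⁻¹).mulVec (bcVec n)

/-- The row vector `u = (α^{n-1}, …, α, 1)`. -/
def uvec (n : ℕ) (α : ℝ) : Fin n → ℝ := fun i => α ^ (n - 1 - (i : ℕ))

/-- The hyperplane `E = {x : uᵀ(x − Y) = 0}`. -/
def Eset (n : ℕ) (aL : Fin n → ℝ) (α : ℝ) : Set (Fin n → ℝ) :=
  {x | ∑ i : Fin n, uvec n α i * (x i - Ypt n aL i) = 0}

/-- The slab `H = {x : |x_i| ≤ M_i r^{i-1}, i = 2,…,n}` with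
`M_i = (2α/(α−1))·binom(n−1,i−1)`. -/
def Hset (n : ℕ) (α r : ℝ) : Set (Fin n → ℝ) :=
  {x | ∀ i : Fin n, 1 ≤ (i : ℕ) →
    |x i| ≤ 2 * α / (α - 1) * ((n - 1).choose (i : ℕ) : ℝ) * r ^ (i : ℕ)}

/-- The first component `C₁` of the point `C`. -/
def Cfirst (n : ℕ) (aL aR : Fin n → ℝ) (α : ℝ) : ℝ :=
  (1 - 1 / (1 - bcMat n aL).det +
      1 / (1 - bcMat n aL).det *
        ∑ k ∈ univ.filter (fun k : Fin n => 1 ≤ (k : ℕ)),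
          α ^ (-((k : ℕ) : ℤ)) *
            ∑ j ∈ univ.filter (fun j : Fin n => (k : ℕ) ≤ (j : ℕ)), aL j) /
    ∑ i : Fin n, α ^ (-((i : ℕ) : ℤ)) * aR i

/-- The point `C = (C₁, 0, …, 0)`. -/
def Cpt (n : ℕ) (aL aR : Fin n → ℝ) (α : ℝ) : Fin n → ℝ :=
  fun i => if (i : ℕ) = 0 then Cfirst n aL aR α else 0

/-- The polytope `Ω = Conv({C} ∪ (E ∩ H))`. -/
def OmegaSet (n : ℕ) (aL aR : Fin n → ℝ) (α r : ℝ) : Set (Fin n → ℝ) :=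
  convexHull ℝ ({Cpt n aL aR α} ∪ (Eset n aL α ∩ Hset n α r))

/-- The cone `Ψ` of scalar multiples of vectors `(1, m₁, …, m_{n-1})` with
`|m_i| ≤ N_i r^{i-1}`, `N_i = ((min(α,β)−1)/2)·binom(n−1,i−1)`. -/
def PsiSet (n : ℕ) (α β r : ℝ) : Set (Fin n → ℝ) :=
  {x | ∃ γ : ℝ, ∃ v : Fin n → ℝ,
    (∀ i : Fin n, (i : ℕ) = 0 → v i = 1) ∧
    (∀ i : Fin n, 1 ≤ (i : ℕ) →
      |v i| ≤ (min α β - 1) / 2 * ((n - 1).choose ((i : ℕ) - 1) : ℝ) * r ^ ((i : ℕ) - 1)) ∧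
    x = γ • v}

/-- `P` is the vertex `P^(s)`: the point of `E` whose `i`-th component, `i = 2,…,n`,
is `s_{i-1}·M_i r^{i-1}`. -/
def isVertexP (n : ℕ) (aL : Fin n → ℝ) (α r : ℝ) (s : Fin (n - 1) → ℝ)
    (P : Fin n → ℝ) : Prop :=
  P ∈ Eset n aL α ∧
    ∀ i : Fin n, ∀ _h : 1 ≤ (i : ℕ),
      P i = s ⟨(i : ℕ) - 1, by have := i.isLt; omega⟩ *
        (2 * α / (α - 1) * ((n - 1).choose (i : ℕ) : ℝ) * r ^ (i : ℕ))

/-- The `k`-th elementary symmetric polynomial of `η`. -/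
def esym {m : ℕ} (η : Fin m → ℂ) (k : ℕ) : ℂ :=
  ∑ t ∈ powersetCard k univ, ∏ j ∈ t, η j

end

set_option linter.unusedVariables false

lemma my_charpoly_eval {n : ℕ} (M : Matrix (Fin n) (Fin n) ℝ) (x : ℝ) :
    M.charpoly.eval x = (x • (1 : Matrix (Fin n) (Fin n) ℝ) - M).det := by
  rw [Matrix.charpoly, ← Polynomial.coe_evalRingHom, RingHom.map_det]
  congr 1
  ext i j
  by_cases h : i = j
  · subst h
    simp [Matrix.charmatrix_apply_eq, Matrix.one_apply]
  · simp [Matrix.charmatrix_apply_ne _ _ _ h, Matrix.one_apply, h]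


lemma vecMul_bcMat {n : ℕ} (a : Fin n → ℝ) (w : Fin n → ℝ) (j : Fin n) :
    (w ᵥ* bcMat n a) j =
      if h : (j : ℕ) = 0 then -∑ i, w i * a i
      else w ⟨(j : ℕ) - 1, by omega⟩ := by
  classical
  have hvm : (w ᵥ* bcMat n a) j = ∑ i, w i * bcMat n a i j := rfl
  rw [hvm]
  by_cases h : (j : ℕ) = 0
  · rw [dif_pos h]
    have : ∀ i : Fin n, w i * bcMat n a i j = -(w i * a i) := by
      intro i
      simp [bcMat, h]
    rw [Finset.sum_congr rfl (fun i _ => this i), Finset.sum_neg_distrib]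
  · rw [dif_neg h]
    rw [Finset.sum_eq_single (⟨(j : ℕ) - 1, by omega⟩ : Fin n)]
    · have hone : bcMat n a ⟨(j : ℕ) - 1, by omega⟩ j = 1 := by
        simp only [bcMat, Matrix.of_apply]
        rw [if_neg h, if_pos (show (j : ℕ) = (j : ℕ) - 1 + 1 by omega)]
        norm_num
      rw [hone, mul_one]
    · intro i _ hi
      have hne : (j : ℕ) ≠ (i : ℕ) + 1 := by
        intro hc
        apply hi
        apply Fin.ext
        simp
        omega
      simp [bcMat, h, hne]
    · intro hmem
      exact absurd (Finset.mem_univ _) hmem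

lemma bc_key {n : ℕ} (hn : 1 ≤ n) (a : Fin n → ℝ) {α r : ℝ}
    (hα : 1 < α) (hr1 : r < 1)
    (hspec : specA n (bcMat n a) α r) :
    (∑ i : Fin n, a i * α ^ (n - 1 - (i : ℕ))) = -α ^ n ∧ (1 - bcMat n a).det ≠ 0 := by
  classical
  obtain ⟨lam, hlam, hfac⟩ := hspec
  set A := bcMat n a with hAdef
  have hmapeval : ∀ x : ℝ, (algebraMap ℝ ℂ) (A.charpoly.eval x)
      = ((x : ℂ) - α) * ∏ j, ((x : ℂ) - lam j) := by
    intro x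
    have h1 : (A.charpoly.map (algebraMap ℝ ℂ)).eval (algebraMap ℝ ℂ x)
        = algebraMap ℝ ℂ (A.charpoly.eval x) := by
      rw [Polynomial.eval_map, Polynomial.eval₂_at_apply]
    rw [← h1, hfac]
    simp [Polynomial.eval_prod]
  have hdet1 : (1 - A).det ≠ 0 := by
    have h0 : A.charpoly.eval 1 ≠ 0 := by
      intro hc
      have h2 : ((1 : ℂ) - α) * ∏ j, ((1 : ℂ) - lam j) = 0 := by
        have := hmapeval 1
        rw [hc, map_zero] at this
        exact this.symm
      rcases mul_eq_zero.mp h2 with h | h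
      · have h3 : (α : ℂ) = 1 := by linear_combination -h
        have h4 : α = (1 : ℝ) := by exact_mod_cast h3
        linarith
      · obtain ⟨j, -, hj⟩ := Finset.prod_eq_zero_iff.mp h
        have h5 : lam j = 1 := by linear_combination -hj
        have h6 := hlam j
        rw [h5] at h6
        simp at h6
        linarith
    rw [my_charpoly_eval, one_smul] at h0
    exact h0
  refine ⟨?_, hdet1⟩
  have hroot : (α • (1 : Matrix (Fin n) (Fin n) ℝ) - A).det = 0 := by
    have h2 : algebraMap ℝ ℂ (A.charpoly.eval α) = 0 := by
      rw [hmapeval]; simp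
    have h3 : A.charpoly.eval α = 0 := by
      have := Complex.ofReal_injective (by simpa using h2)
      simpa using this
    rw [my_charpoly_eval] at h3
    exact h3
  obtain ⟨w, hw0, hwA⟩ := Matrix.exists_vecMul_eq_zero_iff.mpr hroot
  have hsm : (w ᵥ* (α • (1 : Matrix (Fin n) (Fin n) ℝ))) = α • w := by
    ext j
    simp [Matrix.vecMul, dotProduct, Matrix.smul_apply, Matrix.one_apply,
      mul_ite, mul_comm]
  have hwA' : ∀ j, (w ᵥ* A) j = α * w j := by
    intro j
    have h := congrFun hwA j
    rw [Matrix.vecMul_sub] at h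
    have := congrFun hsm j
    simp only [Pi.sub_apply, Pi.zero_apply] at h
    rw [this] at h
    simp only [Pi.smul_apply, smul_eq_mul] at h
    linarith
  -- the recursion downward
  have hAj : ∀ p : ℕ, ∀ _hp : p + 1 ≤ n - 1, w ⟨p, by omega⟩ = α * w ⟨p + 1, by omega⟩ := by
    intro p hp
    have h := vecMul_bcMat a w ⟨p + 1, by omega⟩
    rw [hwA' ⟨p + 1, by omega⟩, dif_neg (by simp)] at h
    exact h.symm
  have hwk : ∀ k : ℕ, k ≤ n - 1 →
      w ⟨n - 1 - k, by omega⟩ = α ^ k * w ⟨n - 1, by omega⟩ := by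
    intro k
    induction k with
    | zero => intro _; simp
    | succ k ih =>
      intro hk
      have h1 := hAj (n - 1 - (k + 1)) (by omega)
      have e : (⟨n - 1 - (k + 1) + 1, by omega⟩ : Fin n) = ⟨n - 1 - k, by omega⟩ :=
        Fin.ext (by simp; omega)
      rw [e, ih (by omega)] at h1
      rw [h1, pow_succ]
      ring
  have hwall : ∀ i : Fin n, w i = α ^ (n - 1 - (i : ℕ)) * w ⟨n - 1, by omega⟩ := by
    intro i
    have hi := i.isLt
    have h := hwk (n - 1 - (i : ℕ)) (by omega)
    have e : (⟨n - 1 - (n - 1 - (i : ℕ)), by omega⟩ : Fin n) = i := Fin.ext (by simp; omega)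
    rw [e] at h
    exact h
  have ht : w ⟨n - 1, by omega⟩ ≠ 0 := by
    intro h
    apply hw0
    funext i
    rw [hwall i, h, mul_zero]
    rfl
  have h00 : -∑ i, w i * a i = α * w ⟨0, by omega⟩ := by
    have h := vecMul_bcMat a w ⟨0, by omega⟩
    rw [hwA' ⟨0, by omega⟩, dif_pos rfl] at h
    exact h.symm
  have hsum : ∑ i, w i * a i = (∑ i : Fin n, a i * α ^ (n - 1 - (i : ℕ))) * w ⟨n - 1, by omega⟩ := by
    rw [Finset.sum_mul]
    apply Finset.sum_congr rfl
    intro i _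
    rw [hwall i]
    ring
  have hw0v : w ⟨0, by omega⟩ = α ^ (n - 1) * w ⟨n - 1, by omega⟩ := by
    have := hwall ⟨0, by omega⟩
    simpa using this
  have hα2 : α * α ^ (n - 1) = α ^ n := by
    rw [← pow_succ']
    congr 1
    omega
  apply mul_right_cancel₀ ht
  rw [hsum, hw0v] at h00
  linear_combination -h00 - w ⟨n - 1, by omega⟩ * hα2


/-- Under Assumption (A) (for `A_L`), `0 < ε < 1`, and `r(n−1) ≤ ε`, each vertex `P^(s)`
satisfies `|P^(s)_1 + 1/(α−1)| ≤ 2(2−ε) r(n−1)/((α−1)(1−ε)²)`. -/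
theorem stmt_8 (n : ℕ) (hn : 2 ≤ n) (aL : Fin n → ℝ) (α r ε : ℝ)
    (hα : 1 < α) (hr0 : 0 < r) (hr1 : r < 1)
    (hspec : specA n (bcMat n aL) α r)
    (hε0 : 0 < ε) (hε1 : ε < 1) (hrn : r * ((n : ℝ) - 1) ≤ ε)
    (s : Fin (n - 1) → ℝ) (hs : ∀ j, s j = 1 ∨ s j = -1)
    (P : Fin n → ℝ) (hP : isVertexP n aL α r s P) :
    |P ⟨0, by omega⟩ + 1 / (α - 1)| ≤
      2 * (2 - ε) * (r * ((n : ℝ) - 1)) / ((α - 1) * (1 - ε) ^ 2) := by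
  classical
  obtain ⟨m, rfl⟩ : ∃ m, n = m + 1 := ⟨n - 1, by omega⟩
  have hm : 1 ≤ m := by omega
  obtain ⟨hkey, hdet⟩ := bc_key (by omega) aL hα hr1 hspec
  set A := bcMat (m + 1) aL with hAdef
  have hαpos : (0 : ℝ) < α := by linarith
  have hα1 : (0 : ℝ) < α - 1 := by linarith
  have hε2 : (0 : ℝ) < 1 - ε := by linarith
  -- left eigenvector property
  have huA : ∀ j : Fin (m + 1), (uvec (m + 1) α ᵥ* A) j = α * uvec (m + 1) α j := by
    intro j
    rw [vecMul_bcMat]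
    by_cases h : (j : ℕ) = 0
    · rw [dif_pos h]
      have h1 : ∑ i, uvec (m + 1) α i * aL i = ∑ i : Fin (m + 1), aL i * α ^ (m + 1 - 1 - (i : ℕ)) := by
        apply Finset.sum_congr rfl
        intro i _
        simp only [uvec]
        ring
      rw [h1, hkey, neg_neg]
      show α ^ (m + 1) = α * α ^ (m + 1 - 1 - (j : ℕ))
      rw [h]
      rw [show m + 1 - 1 - 0 = m from rfl, pow_succ]
      ring
    · rw [dif_neg h]
      have hj := j.isLt
      show α ^ (m - ((j : ℕ) - 1)) = α * α ^ (m - (j : ℕ))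
      rw [show m - ((j : ℕ) - 1) = (m - (j : ℕ)) + 1 by omega, pow_succ]
      ring
  have hu1 : uvec (m + 1) α ᵥ* (1 - A) = (1 - α) • uvec (m + 1) α := by
    ext j
    rw [Matrix.vecMul_sub]
    simp only [Pi.sub_apply, Matrix.vecMul_one, Pi.smul_apply, smul_eq_mul]
    rw [huA j]
    ring
  have hdetu : IsUnit (1 - A).det := isUnit_iff_ne_zero.mpr hdet
  have hne1α : (1 : ℝ) - α ≠ 0 := by linarith
  have hu2 : uvec (m + 1) α ᵥ* (1 - A)⁻¹ = (1 - α)⁻¹ • uvec (m + 1) α := by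
    calc uvec (m + 1) α ᵥ* (1 - A)⁻¹
        = ((1 - α)⁻¹ • ((1 - α) • uvec (m + 1) α)) ᵥ* (1 - A)⁻¹ := by
          rw [smul_smul, inv_mul_cancel₀ hne1α, one_smul]
      _ = (1 - α)⁻¹ • ((uvec (m + 1) α ᵥ* (1 - A)) ᵥ* (1 - A)⁻¹) := by
          rw [← hu1, Matrix.smul_vecMul]
      _ = (1 - α)⁻¹ • (uvec (m + 1) α ᵥ* ((1 - A) * (1 - A)⁻¹)) := by
          rw [Matrix.vecMul_vecMul]
      _ = (1 - α)⁻¹ • uvec (m + 1) α := by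
          rw [Matrix.mul_nonsing_inv _ hdetu, Matrix.vecMul_one]
  have hdotY : ∑ i, uvec (m + 1) α i * Ypt (m + 1) aL i = α ^ m * (1 - α)⁻¹ := by
    have h0 : ∑ i, uvec (m + 1) α i * Ypt (m + 1) aL i
        = uvec (m + 1) α ⬝ᵥ Ypt (m + 1) aL := rfl
    rw [h0, Ypt, Matrix.dotProduct_mulVec, hu2]
    simp [dotProduct, bcVec, uvec, Fin.sum_univ_succ]
    ring
  have hE : ∑ i, uvec (m + 1) α i * (P i - Ypt (m + 1) aL i) = 0 := hP.1
  have hsumP : ∑ i, uvec (m + 1) α i * P i = α ^ m * (1 - α)⁻¹ := by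
    have h1 : ∑ i, uvec (m + 1) α i * (P i - Ypt (m + 1) aL i)
        = ∑ i, uvec (m + 1) α i * P i - ∑ i, uvec (m + 1) α i * Ypt (m + 1) aL i := by
      rw [← Finset.sum_sub_distrib]
      apply Finset.sum_congr rfl
      intros
      ring
    rw [h1, hdotY] at hE
    linarith
  -- values of P
  have hP2 : ∀ j : Fin m, P j.succ
      = s j * (2 * α / (α - 1) * ((m.choose ((j : ℕ) + 1)) : ℝ) * r ^ ((j : ℕ) + 1)) :=
    fun j => hP.2 j.succ (Nat.succ_le_succ (Nat.zero_le _))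
  -- split the sum
  have hexp : α ^ m * P 0 + ∑ j : Fin m, α ^ (m - ((j : ℕ) + 1)) * P j.succ
      = α ^ m * (1 - α)⁻¹ := by
    rw [← hsumP, Fin.sum_univ_succ]
    rfl
  set T := ∑ j : Fin m, α ^ (m - ((j : ℕ) + 1)) * P j.succ with hTdef
  have hT : α ^ m * (P 0 + 1 / (α - 1)) = -T := by
    have hinv : (1 - α)⁻¹ = -(1 / (α - 1)) := by
      field_simp
      ring
    rw [hinv] at hexp
    linear_combination hexp
  have hαm : (0 : ℝ) < α ^ m := pow_pos hαpos m
  -- bound on T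
  set Sc : ℝ := ∑ j ∈ Finset.range m, ((m.choose (j + 1)) : ℝ) * r ^ (j + 1) with hSdef
  have hTb : |T| ≤ α ^ m * (2 / (α - 1) * Sc) := by
    calc |T| ≤ ∑ j : Fin m, |α ^ (m - ((j : ℕ) + 1)) * P j.succ| :=
          Finset.abs_sum_le_sum_abs _ _
    _ ≤ ∑ j : Fin m, α ^ m * (2 / (α - 1) * (((m.choose ((j : ℕ) + 1)) : ℝ) * r ^ ((j : ℕ) + 1))) := by
        apply Finset.sum_le_sum
        intro j _
        have hsj : |s j| = 1 := by rcases hs j with h | h <;> simp [h]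
        rw [hP2 j, abs_mul, abs_mul, hsj]
        have hr' : (0 : ℝ) ≤ r := le_of_lt hr0
        have hc : (0 : ℝ) ≤ ((m.choose ((j : ℕ) + 1)) : ℝ) := Nat.cast_nonneg _
        rw [abs_of_nonneg (by positivity : (0:ℝ) ≤ α ^ (m - ((j : ℕ) + 1))),
          abs_mul, abs_mul,
          abs_of_nonneg (by positivity : (0:ℝ) ≤ 2 * α / (α - 1)),
          abs_of_nonneg hc, abs_of_nonneg (by positivity : (0:ℝ) ≤ r ^ ((j : ℕ) + 1))]
        have hpow : α ^ (m - ((j : ℕ) + 1)) * α ≤ α ^ m := by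
          rw [← pow_succ]
          exact pow_le_pow_right₀ (le_of_lt hα) (by have := j.isLt; omega)
        calc α ^ (m - ((j : ℕ) + 1)) * (1 * (2 * α / (α - 1) * ((m.choose ((j : ℕ) + 1)) : ℝ) * r ^ ((j : ℕ) + 1)))
            = (α ^ (m - ((j : ℕ) + 1)) * α) * (2 / (α - 1) * (((m.choose ((j : ℕ) + 1)) : ℝ) * r ^ ((j : ℕ) + 1))) := by
              field_simp
          _ ≤ α ^ m * (2 / (α - 1) * (((m.choose ((j : ℕ) + 1)) : ℝ) * r ^ ((j : ℕ) + 1))) := by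
              apply mul_le_mul_of_nonneg_right hpow
              positivity
    _ = α ^ m * (2 / (α - 1) * Sc) := by
        rw [hSdef, Finset.mul_sum, Finset.mul_sum]
        rw [Finset.sum_range fun j => α ^ m * (2 / (α - 1) * (((m.choose (j + 1)) : ℝ) * r ^ (j + 1)))]
  -- bound on Sc
  have hx0 : (0 : ℝ) ≤ r * m := by positivity
  have hxε : r * (m : ℝ) ≤ ε := by
    have : ((m : ℝ) + 1) - 1 = (m : ℝ) := by ring
    calc r * (m : ℝ) = r * (((m + 1 : ℕ) : ℝ) - 1) := by push_cast; ring
      _ ≤ ε := hrn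
  have hSb : Sc ≤ r * m * (1 / (1 - ε)) := by
    have hgeo : ∑ j ∈ Finset.range m, ε ^ j ≤ 1 / (1 - ε) := by
      rw [geom_sum_eq (by linarith : ε ≠ 1) m]
      have h1 : (ε ^ m - 1) / (ε - 1) = (1 - ε ^ m) / (1 - ε) := by
        rw [div_eq_div_iff (by linarith) (by linarith)]
        ring
      rw [h1]
      gcongr
      nlinarith [pow_nonneg hε0.le m]
    calc Sc ≤ ∑ j ∈ Finset.range m, (r * m) * ε ^ j := by
          apply Finset.sum_le_sum
          intro j _
          have h1 : ((m.choose (j + 1)) : ℝ) ≤ ((m : ℝ)) ^ (j + 1) := by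
            exact_mod_cast Nat.choose_le_pow m (j + 1)
          calc ((m.choose (j + 1)) : ℝ) * r ^ (j + 1)
              ≤ (m : ℝ) ^ (j + 1) * r ^ (j + 1) := by
                apply mul_le_mul_of_nonneg_right h1
                positivity
            _ = (r * m) * (r * m) ^ j := by rw [← mul_pow]; ring
            _ ≤ (r * m) * ε ^ j := by
                apply mul_le_mul_of_nonneg_left _ hx0
                exact pow_le_pow_left₀ hx0 hxε j
      _ = (r * m) * ∑ j ∈ Finset.range m, ε ^ j := by rw [Finset.mul_sum]
      _ ≤ r * m * (1 / (1 - ε)) := by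
          apply mul_le_mul_of_nonneg_left hgeo hx0
  -- put everything together
  have hmain : |P 0 + 1 / (α - 1)| ≤ 2 / (α - 1) * Sc := by
    have h1 : α ^ m * |P 0 + 1 / (α - 1)| = |T| := by
      rw [← abs_of_pos hαm, ← abs_mul, hT, abs_neg]
    have h2 : α ^ m * |P 0 + 1 / (α - 1)| ≤ α ^ m * (2 / (α - 1) * Sc) := by
      rw [h1]; exact hTb
    exact le_of_mul_le_mul_left h2 hαm
  have hgoal : |P 0 + 1 / (α - 1)| ≤ 2 * (2 - ε) * (r * m) / ((α - 1) * (1 - ε) ^ 2) := by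
    calc |P 0 + 1 / (α - 1)| ≤ 2 / (α - 1) * Sc := hmain
      _ ≤ 2 / (α - 1) * (r * m * (1 / (1 - ε))) := by
          apply mul_le_mul_of_nonneg_left hSb (by positivity)
      _ = 2 * (r * m) / ((α - 1) * (1 - ε)) := by
          field_simp
      _ ≤ 2 * (2 - ε) * (r * m) / ((α - 1) * (1 - ε) ^ 2) := by
          rw [div_le_div_iff₀ (by positivity) (by positivity)]
          nlinarith [mul_nonneg (mul_nonneg hx0 hα1.le) hε2.le]
  have hcast : ((m : ℝ)) = ((m + 1 : ℕ) : ℝ) - 1 := by push_cast; ring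
  show |P ⟨0, _⟩ + 1 / (α - 1)| ≤ 2 * (2 - ε) * (r * (((m + 1 : ℕ) : ℝ) - 1)) / ((α - 1) * (1 - ε) ^ 2)
  rw [← hcast]
  exact hgoal
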